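/- Let f be a nonconstant polynomial, c ∈ ℂ, and f_n as in the Fibonacci system. Then there exists a constant A > 0 such that for every n ≥ 1 and every z ∈ ℂ, |log₊|f_{n+1}(z)| − log₊|f_n(z)| − log₊|f_{n-1}(z)|| ≤ A, where log₊(x) = max(log x, 0). -/

import Mathlib

private lemma aux_logp_eq {x : ℝ} (hx : 0 ≤ x) :
    max (Real.log x) 0 = Real.log (max x 1) := by
  rcases le_total x 1 with h | h
  · rw [max_eq_right h, Real.log_one, max_eq_right (Real.log_nonpos hx h)]
  · rw [max_eq_left h, max_eq_left (Real.log_nonneg h)]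

private lemma aux_logp_le {x Y : ℝ} (hx : 0 ≤ x) (hxY : x ≤ Y) (hY : 1 ≤ Y) :
    max (Real.log x) 0 ≤ Real.log Y := by
  refine max_le ?_ (Real.log_nonneg hY)
  rcases eq_or_lt_of_le hx with h | h
  · rw [← h, Real.log_zero]; exact Real.log_nonneg hY
  · exact Real.log_le_log h hxY

private lemma aux_half {x : ℝ} (hx : 1/2 ≤ x) :
    max (Real.log x) 0 ≤ Real.log x + Real.log 2 := by
  refine max_le (by linarith [Real.log_nonneg (by norm_num : (1:ℝ) ≤ 2)]) ?_
  have h : 0 ≤ Real.log (x * 2) := Real.log_nonneg (by linarith)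
  rwa [Real.log_mul (by linarith) two_ne_zero] at h

theorem stmt5 (f : Polynomial ℂ) (hf : 0 < f.degree) (c : ℂ)
    (fs : ℕ → ℂ → ℂ)
    (h0 : ∀ z, fs 0 z = z) (h1 : ∀ z, fs 1 z = f.eval z)
    (hrec : ∀ n z, fs (n + 2) z = fs (n + 1) z * fs n z + c) :
    ∃ A : ℝ, A > 0 ∧ ∀ n : ℕ, 1 ≤ n → ∀ z : ℂ,
      |max (Real.log (‖fs (n + 1) z‖)) 0 -
        max (Real.log (‖fs n z‖)) 0 -
        max (Real.log (‖fs (n - 1) z‖)) 0| ≤ A := by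
  set a : ℝ := ‖c‖ with ha
  have ha0 : 0 ≤ a := norm_nonneg c
  -- growth of f at infinity
  have htend : Filter.Tendsto (fun z : ℂ => ‖f.eval z‖)
      (Filter.comap (fun z : ℂ => ‖z‖) Filter.atTop) Filter.atTop :=
    f.tendsto_norm_atTop hf (z := id) Filter.tendsto_comap
  obtain ⟨B₀, hB₀⟩ : ∃ B : ℝ, ∀ z : ℂ, B ≤ ‖z‖ → 2 ≤ ‖f.eval z‖ := by
    have h := htend.eventually_ge_atTop 2
    rw [Filter.eventually_comap] at h
    obtain ⟨B, hB⟩ := Filter.eventually_atTop.1 h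
    exact ⟨B, fun z hz => hB _ hz z rfl⟩
  set B : ℝ := max B₀ 1 with hBdef
  have hB1 : 1 ≤ B := le_max_right _ _
  have hB : ∀ z : ℂ, B ≤ ‖z‖ → 2 ≤ ‖f.eval z‖ :=
    fun z hz => hB₀ z ((le_max_left _ _).trans hz)
  -- bound of f on the ball of radius B
  obtain ⟨C₁, hC₁⟩ : ∃ C : ℝ, ∀ z : ℂ, ‖z‖ ≤ B → ‖f.eval z‖ ≤ C := by
    obtain ⟨z₀, hz₀, hmax⟩ := (isCompact_closedBall (0:ℂ) B).exists_isMaxOn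
      ⟨0, Metric.mem_closedBall_self (by linarith)⟩
      ((continuous_norm.comp f.continuous).continuousOn)
    refine ⟨‖f.eval z₀‖, fun z hz => ?_⟩
    exact hmax (by simpa [Metric.mem_closedBall, Complex.dist_eq] using hz)
  have hC₁0 : 0 ≤ C₁ :=
    le_trans (norm_nonneg _) (hC₁ 0 (by simpa using (by linarith : (0:ℝ) ≤ B)))
  set R : ℝ := B + C₁ + 4 * a + 4 with hRdef
  have hR1 : 1 ≤ R := by linarith
  have hRB : B + 1 ≤ R := by linarith
  have hRC : C₁ + 1 ≤ R := by linarith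
  have hRa : 4 * a + 4 ≤ R := by linarith
  -- key lemma: never a (tiny, huge) consecutive pair
  have key : ∀ n : ℕ, ∀ z : ℂ,
      ¬ (‖fs n z‖ ≤ 1/2 ∧ R ≤ ‖fs (n+1) z‖) := by
    intro n
    induction n using Nat.strong_induction_on with
    | _ n ih =>
      match n with
      | 0 =>
        rintro z ⟨hz, hfz⟩
        rw [h0] at hz; rw [h1] at hfz
        have : ‖f.eval z‖ ≤ C₁ := hC₁ z (by linarith)
        linarith
      | 1 =>
        rintro z ⟨hfz, h2z⟩
        rw [h1] at hfz
        have hzB : ‖z‖ ≤ B := by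
          by_contra h
          have := hB z (by linarith)
          linarith
        have h2 : fs 2 z = fs 1 z * fs 0 z + c := hrec 0 z
        rw [h2, h1, h0] at h2z
        have hmul : ‖f.eval z‖ * ‖z‖ ≤ (1/2) * B :=
          mul_le_mul hfz hzB (norm_nonneg z) (by norm_num)
        have hle : ‖f.eval z * z + c‖ ≤ (1/2) * B + a := by
          calc ‖f.eval z * z + c‖
              ≤ ‖f.eval z * z‖ + a := norm_add_le _ _
            _ = ‖f.eval z‖ * ‖z‖ + a := by rw [norm_mul]
            _ ≤ (1/2) * B + a := by linarith
        linarith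
      | (m+2) =>
        rintro z ⟨hsm, hbig⟩
        have hbig' : R ≤ ‖fs (m+3) z‖ := hbig
        have e1 : fs (m+3) z = fs (m+2) z * fs (m+1) z + c := hrec (m+1) z
        have e2 : fs (m+2) z = fs (m+1) z * fs m z + c := hrec m z
        have hx0 : 0 ≤ ‖fs m z‖ := norm_nonneg _
        have hy0 : 0 ≤ ‖fs (m+1) z‖ := norm_nonneg _
        have hu0 : 0 ≤ ‖fs (m+2) z‖ := norm_nonneg _
        have hprod1 : R - a ≤ ‖fs (m+2) z‖ * ‖fs (m+1) z‖ := by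
          have h' : ‖fs (m+3) z‖ ≤
              ‖fs (m+2) z‖ * ‖fs (m+1) z‖ + a := by
            rw [e1]
            calc ‖fs (m+2) z * fs (m+1) z + c‖
                ≤ ‖fs (m+2) z * fs (m+1) z‖ + a := norm_add_le _ _
              _ = _ := by rw [norm_mul]
          linarith
        have hyR : R ≤ ‖fs (m+1) z‖ := by
          by_contra h
          push_neg at h
          have : ‖fs (m+2) z‖ * ‖fs (m+1) z‖ ≤ (1/2) * R :=
            mul_le_mul hsm (le_of_lt h) hy0 (by norm_num)
          linarith
        have hprod2 : ‖fs (m+1) z‖ * ‖fs m z‖ ≤ 1/2 + a := by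
          have e3 : fs (m+1) z * fs m z = fs (m+2) z - c := by rw [e2]; ring
          have h' : ‖fs (m+1) z * fs m z‖ ≤ ‖fs (m+2) z‖ + a := by
            rw [e3]; exact norm_sub_le _ _
          rw [norm_mul] at h'
          linarith
        have hxhalf : ‖fs m z‖ ≤ 1/2 := by
          by_contra h
          push_neg at h
          have : R * (1/2) ≤ ‖fs (m+1) z‖ * ‖fs m z‖ :=
            mul_le_mul hyR (le_of_lt h) (by norm_num) (by linarith)
          linarith
        exact ih m (by omega) z ⟨hxhalf, hyR⟩
  -- huge is never followed by tiny
  have key2 : ∀ n : ℕ, ∀ z : ℂ, R ≤ ‖fs n z‖ → 1/2 < ‖fs (n+1) z‖ := by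
    intro n z hn
    match n with
    | 0 =>
      rw [h0] at hn; rw [h1]
      have := hB z (by linarith)
      linarith
    | (m+1) =>
      by_contra h
      push_neg at h
      have e2 : fs (m+2) z = fs (m+1) z * fs m z + c := hrec m z
      have hprod2 : ‖fs (m+1) z‖ * ‖fs m z‖ ≤ 1/2 + a := by
        have e3 : fs (m+1) z * fs m z = fs (m+2) z - c := by rw [e2]; ring
        have h' : ‖fs (m+1) z * fs m z‖ ≤ ‖fs (m+2) z‖ + a := by
          rw [e3]; exact norm_sub_le _ _
        rw [norm_mul] at h'
        linarith
      have hxhalf : ‖fs m z‖ ≤ 1/2 := by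
        by_contra h'
        push_neg at h'
        have : R * (1/2) ≤ ‖fs (m+1) z‖ * ‖fs m z‖ :=
          mul_le_mul hn (le_of_lt h') (by norm_num) (norm_nonneg _)
        linarith
      exact key m z ⟨hxhalf, hn⟩
  -- the constant
  refine ⟨Real.log (1 + a) + 2 * Real.log R + 3 * Real.log 2 + 1, ?_, ?_⟩
  · have l1 : 0 ≤ Real.log (1 + a) := Real.log_nonneg (by linarith)
    have l2 : 0 ≤ Real.log R := Real.log_nonneg hR1
    have l3 : 0 ≤ Real.log 2 := Real.log_nonneg (by norm_num)
    linarith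
  intro n hn z
  obtain ⟨m, rfl⟩ : ∃ m, n = m + 1 := ⟨n - 1, by omega⟩
  simp only [Nat.add_sub_cancel]
  set w : ℂ := fs (m+1) z with hw
  set v : ℂ := fs m z with hv
  have hW : fs (m+1+1) z = w * v + c := hrec m z
  rw [hW]
  have l1 : 0 ≤ Real.log (1 + a) := Real.log_nonneg (by linarith)
  have l2 : 0 ≤ Real.log R := Real.log_nonneg hR1
  have l3 : 0 ≤ Real.log 2 := Real.log_nonneg (by norm_num)
  have habs0 : (0:ℝ) ≤ ‖w*v+c‖ := norm_nonneg _
  have hpnn : (0:ℝ) ≤ max (Real.log (‖w*v+c‖)) 0 := le_max_right _ _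
  -- upper bound
  have hub : max (Real.log (‖w*v+c‖)) 0 ≤
      max (Real.log (‖w‖)) 0 + max (Real.log (‖v‖)) 0 + Real.log (1 + a) := by
    set Mw : ℝ := max (‖w‖) 1 with hMw
    set Mv : ℝ := max (‖v‖) 1 with hMv
    have hMw1 : 1 ≤ Mw := le_max_right _ _
    have hMv1 : 1 ≤ Mv := le_max_right _ _
    have hMM : (1:ℝ) ≤ Mw * Mv := by nlinarith
    have hamul : a ≤ a * (Mw * Mv) := le_mul_of_one_le_right ha0 hMM
    have hble : ‖w*v+c‖ ≤ (1 + a) * (Mw * Mv) := by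
      have h₁ : ‖w*v+c‖ ≤ ‖w‖ * ‖v‖ + a := by
        calc ‖w*v+c‖ ≤ ‖w*v‖ + a := norm_add_le _ _
          _ = _ := by rw [norm_mul]
      have h₂ : ‖w‖ * ‖v‖ ≤ Mw * Mv :=
        mul_le_mul (le_max_left _ _) (le_max_left _ _) (norm_nonneg _) (by linarith)
      nlinarith [h₁, h₂, hamul]
    have hY1 : (1:ℝ) ≤ (1 + a) * (Mw * Mv) := by nlinarith [hMM, hamul]
    have hkey := aux_logp_le habs0 hble hY1
    have heq : Real.log ((1 + a) * (Mw * Mv)) =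
        Real.log (1 + a) + Real.log Mw + Real.log Mv := by
      rw [Real.log_mul (by linarith) (by positivity), Real.log_mul (by positivity) (by positivity)]
      ring
    rw [heq] at hkey
    rw [aux_logp_eq (norm_nonneg w), aux_logp_eq (norm_nonneg v)]
    linarith
  -- lower bound
  have hlb : max (Real.log (‖w‖)) 0 + max (Real.log (‖v‖)) 0 ≤
      max (Real.log (‖w*v+c‖)) 0 + (2 * Real.log R + 3 * Real.log 2) := by
    by_cases hcase : ‖w‖ ≤ R ∧ ‖v‖ ≤ R
    · have e1 : max (Real.log (‖w‖)) 0 ≤ Real.log R :=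
        aux_logp_le (norm_nonneg w) hcase.1 hR1
      have e2 : max (Real.log (‖v‖)) 0 ≤ Real.log R :=
        aux_logp_le (norm_nonneg v) hcase.2 hR1
      linarith
    · -- one of them is > R; then both are > 1/2 and their product is ≥ R/2
      have hboth : 1/2 < ‖w‖ ∧ 1/2 < ‖v‖ ∧
          R/2 ≤ ‖w‖ * ‖v‖ := by
        push_neg at hcase
        by_cases hw' : ‖w‖ ≤ R
        · have hvR : R < ‖v‖ := hcase hw'
          have hwhalf : 1/2 < ‖w‖ := key2 m z (le_of_lt hvR)
          refine ⟨hwhalf, by linarith, ?_⟩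
          have := mul_le_mul (le_of_lt hwhalf) (le_of_lt hvR) (by linarith) (by linarith)
          linarith
        · push_neg at hw'
          have hvhalf : 1/2 < ‖v‖ := by
            by_contra hv'
            push_neg at hv'
            exact key m z ⟨hv', le_of_lt hw'⟩
          refine ⟨by linarith, hvhalf, ?_⟩
          have := mul_le_mul (le_of_lt hw') (le_of_lt hvhalf) (by norm_num) (by linarith)
          linarith
      obtain ⟨hwhalf, hvhalf, hprod⟩ := hboth
      have hwpos : (0:ℝ) < ‖w‖ := by linarith
      have hvpos : (0:ℝ) < ‖v‖ := by linarith
      have hlow : ‖w‖ * ‖v‖ / 2 ≤ ‖w*v+c‖ := by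
        have h₁ : ‖w*v‖ - a ≤ ‖w*v+c‖ := by
          have h₂ : ‖w*v‖ ≤ ‖w*v+c‖ + a := by
            have e3 : w*v = (w*v+c) - c := by ring
            calc ‖w*v‖ = ‖(w*v+c) - c‖ := by rw [← e3]
              _ ≤ ‖w*v+c‖ + a := norm_sub_le _ _
          linarith
        rw [norm_mul] at h₁
        have : a ≤ ‖w‖ * ‖v‖ / 2 := by linarith
        linarith
      have hlowpos : (0:ℝ) < ‖w‖ * ‖v‖ / 2 := by positivity
      have hlog : Real.log (‖w‖) + Real.log (‖v‖) - Real.log 2 ≤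
          Real.log (‖w*v+c‖) := by
        have h₃ := Real.log_le_log hlowpos hlow
        rw [Real.log_div (by positivity) two_ne_zero,
          Real.log_mul (ne_of_gt hwpos) (ne_of_gt hvpos)] at h₃
        linarith
      have e1 : max (Real.log (‖w‖)) 0 ≤ Real.log (‖w‖) + Real.log 2 :=
        aux_half (le_of_lt hwhalf)
      have e2 : max (Real.log (‖v‖)) 0 ≤ Real.log (‖v‖) + Real.log 2 :=
        aux_half (le_of_lt hvhalf)
      have e3 : Real.log (‖w*v+c‖) ≤ max (Real.log (‖w*v+c‖)) 0 :=
        le_max_left _ _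
      linarith
  rw [abs_le]
  constructor
  · linarith
  · linarith
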